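/- Suppose n, τ are positive integers and Λ ≥ 1 satisfies 4eΛ(τ+1)² ≤ √n, with ρ = (1 + 4eΛ(τ+1)/√n)² and θ = ∑_{t=1}^{τ} ρ^{t/2}. Then (√n(1 − ρ⁻¹) − 4)/(4(1+θ)Λ) ≥ 1/2. -/

import Mathlib

lemma aux_e5 (e L t a : ℝ) (he : 2 ≤ e) (hL : 1 ≤ L) (ht : 1 ≤ t)
    (ha0 : 0 < a) (ha : a ≤ 1/2) :
    2*L*((1+a) + t*e) + 4*(1+a) ≤ 4*e*L*(t+1) := by
  nlinarith [mul_nonneg (mul_nonneg (by linarith : (0:ℝ) ≤ L) (by linarith : (0:ℝ) ≤ t)) (by linarith : (0:ℝ) ≤ e - 2),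
    mul_nonneg (by linarith : (0:ℝ) ≤ L) (by linarith : (0:ℝ) ≤ t - 1),
    mul_nonneg (by linarith : (0:ℝ) ≤ L) (by linarith : (0:ℝ) ≤ 1 - 2*a),
    mul_nonneg (by linarith : (0:ℝ) ≤ L) (by linarith : (0:ℝ) ≤ e - 2)]

theorem stmt_12 (n τ : ℕ) (hn : 0 < n) (hτ : 0 < τ) (Λ : ℝ) (hΛ : 1 ≤ Λ)
    (hbound : 4 * Real.exp 1 * Λ * ((τ : ℝ) + 1) ^ 2 ≤ Real.sqrt n)
    (ρ : ℝ) (hρ : ρ = (1 + 4 * Real.exp 1 * Λ * ((τ : ℝ) + 1) / Real.sqrt n) ^ 2)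
    (θ : ℝ) (hθ : θ = ∑ t ∈ Finset.Icc 1 τ, ρ ^ ((t : ℝ) / 2)) :
    (Real.sqrt n * (1 - ρ⁻¹) - 4) / (4 * (1 + θ) * Λ) ≥ 1 / 2 := by
  set s := Real.sqrt n with hsdef
  have hΛ0 : (0:ℝ) < Λ := lt_of_lt_of_le one_pos hΛ
  have he2 : (2:ℝ) ≤ Real.exp 1 := by linarith [Real.add_one_le_exp 1]
  have hτ1 : (2:ℝ) ≤ (τ:ℝ) + 1 := by
    have : (1:ℝ) ≤ (τ:ℝ) := by exact_mod_cast hτ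
    linarith
  have hs0 : 0 < s := Real.sqrt_pos.mpr (by positivity)
  set a := 4 * Real.exp 1 * Λ * ((τ:ℝ)+1) / s with hadef
  have ha0 : 0 < a := by positivity
  have hρ' : ρ = (1+a)^2 := hρ
  clear_value a
  clear hρ
  clear_value s
  have haτ : a * ((τ:ℝ)+1) ≤ 1 := by
    rw [hadef, div_mul_eq_mul_div, div_le_one hs0]
    nlinarith [hbound]
  have ha2 : a ≤ 1/2 := by nlinarith
  have h1a : (0:ℝ) < 1 + a := by linarith
  have hρ1 : ρ = (1+a)^2 := hρ'
  -- rpow computation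
  have hpow : ∀ t : ℕ, ρ ^ ((t:ℝ)/2) = (1+a)^t := by
    intro t
    rw [hρ1, ← Real.rpow_natCast (1+a) 2, ← Real.rpow_mul h1a.le]
    push_cast
    rw [show (2:ℝ) * ((t:ℝ)/2) = (t:ℝ) by ring, Real.rpow_natCast]
  have hθle : θ ≤ (τ:ℝ) * (1+a)^τ := by
    rw [hθ]
    calc ∑ t ∈ Finset.Icc 1 τ, ρ ^ ((t:ℝ)/2)
        ≤ ∑ t ∈ Finset.Icc 1 τ, (1+a)^τ := by
          apply Finset.sum_le_sum
          intro t ht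
          rw [hpow t]
          exact pow_le_pow_right₀ (by linarith) (Finset.mem_Icc.mp ht).2
      _ = (τ:ℝ) * (1+a)^τ := by
          rw [Finset.sum_const, Nat.card_Icc]
          simp
  have hθ0 : 0 ≤ θ := by
    rw [hθ]
    apply Finset.sum_nonneg
    intro t ht
    rw [hpow t]
    positivity
  have hepow : (1+a)^(τ+1) ≤ Real.exp 1 := by
    calc (1+a)^(τ+1) ≤ (Real.exp a)^(τ+1) :=
          pow_le_pow_left₀ h1a.le (by linarith [Real.add_one_le_exp a]) (τ+1)
      _ = Real.exp (((τ:ℝ)+1) * a) := by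
          rw [← Real.exp_nat_mul]
          push_cast
          ring_nf
      _ ≤ Real.exp 1 := Real.exp_le_exp.mpr (by linarith [haτ])
  have hinv : ρ⁻¹ ≤ (1+a)⁻¹ := by
    rw [hρ1]
    apply inv_anti₀ h1a
    nlinarith
  have hsa : s * a = 4 * Real.exp 1 * Λ * ((τ:ℝ)+1) := by
    rw [hadef]; field_simp
  have hτpos : (1:ℝ) ≤ (τ:ℝ) := by exact_mod_cast hτ
  have hτpow : (1:ℝ) ≤ (1+a)^τ := one_le_pow₀ (by linarith : (1:ℝ) ≤ 1+a)
  -- main inequality: 4 + 2*(1+θ)*Λ ≤ s*(1-ρ⁻¹)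
  have hkey : 4 + 2*(1+θ)*Λ ≤ s*(1-ρ⁻¹) := by
    have h1 : s*(1 - (1+a)⁻¹) ≤ s*(1-ρ⁻¹) := by
      apply mul_le_mul_of_nonneg_left _ hs0.le
      linarith
    have h2 : s*(1 - (1+a)⁻¹) = s*a/(1+a) := by
      field_simp
      ring
    have h3 : (4 + 2*(1+θ)*Λ) * (1+a) ≤ s*a := by
      rw [hsa]
      have e1 : (1+θ)*(1+a) ≤ (1+a) + (τ:ℝ) * (1+a)^(τ+1) := by
        have : θ * (1+a) ≤ (τ:ℝ) * (1+a)^τ * (1+a) :=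
          mul_le_mul_of_nonneg_right hθle h1a.le
        have h' : (τ:ℝ) * (1+a)^τ * (1+a) = (τ:ℝ) * (1+a)^(τ+1) := by
          rw [pow_succ]; ring
        nlinarith
      have e2 : (1+a) + (τ:ℝ) * (1+a)^(τ+1) ≤ (1+a) + (τ:ℝ) * Real.exp 1 := by
        have := mul_le_mul_of_nonneg_left hepow (le_trans zero_le_one hτpos)
        linarith
      have e3 : (1+θ)*(1+a) ≤ (1+a) + (τ:ℝ)*Real.exp 1 := e1.trans e2
      have e4 : 2*Λ*((1+θ)*(1+a)) ≤ 2*Λ*((1+a) + (τ:ℝ)*Real.exp 1) :=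
        mul_le_mul_of_nonneg_left e3 (by linarith)
      have e5 : 2*Λ*((1+a) + (τ:ℝ)*Real.exp 1) + 4*(1+a) ≤ 4*Real.exp 1*Λ*((τ:ℝ)+1) :=
        aux_e5 _ _ _ _ he2 hΛ hτpos ha0 ha2
      have expand : (4 + 2*(1+θ)*Λ)*(1+a) = 4*(1+a) + 2*Λ*((1+θ)*(1+a)) := by ring
      linarith
    calc 4 + 2*(1+θ)*Λ = ((4 + 2*(1+θ)*Λ) * (1+a)) / (1+a) := by field_simp
      _ ≤ s*a/(1+a) := by gcongr
      _ = s*(1 - (1+a)⁻¹) := h2.symm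
      _ ≤ s*(1-ρ⁻¹) := h1
  have hD : 0 < 4*(1+θ)*Λ := by positivity
  rw [ge_iff_le, le_div_iff₀ hD]
  linarith
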